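/- Let k ≥ 3 be an odd integer and let W_k be the vertex-signed graph consisting of a cycle v_1 v_2 … v_{2k} in which the vertices with odd index are negative and those with even index are positive, a positive central vertex u adjacent to all k negative cycle vertices, and for each positive cycle vertex a pendant edge joining it to a new leaf vertex. Let c : E(W_k) → {0,a,b} be an edge-labeling satisfying the weak signed edge-labeling parity conditions at every cycle vertex and at the central vertex u (no condition is imposed at the leaf vertices). Then among the k pendant edges, the number labeled a is even, the number labeled b is even, the number labeled 0 is odd, and not all of the pendant edges are labeled 0. -/

import Mathlib

/-- The three labels `0`, `a`, `b` used for signed edge-labelings. -/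
inductive EdgeLabel : Type
  | zero : EdgeLabel
  | a : EdgeLabel
  | b : EdgeLabel
deriving DecidableEq

/-- `labelCount G c x v` is `d_x(v)`: the number of edges of `G` incident to `v`
that carry the label `x` under the edge-labeling `c`. -/
noncomputable def labelCount {V : Type*} (G : SimpleGraph V) (c : Sym2 V → EdgeLabel)
    (x : EdgeLabel) (v : V) : ℕ :=
  {e ∈ G.incidenceSet v | c e = x}.ncard

/-- The weak signed edge-labeling parity conditions at a single vertex `v`:
`d₀(v) ≡ deg(v) (mod 2)`, and `d_a(v) ≡ d_b(v) ≡ deg(v) (mod 2)` if `v` is positive,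
while `d_a(v) ≡ d_b(v) ≡ deg(v) + 1 (mod 2)` if `v` is negative. -/
def WeakParityAt {V : Type*} (G : SimpleGraph V) (pos : V → Prop)
    (c : Sym2 V → EdgeLabel) (v : V) : Prop :=
  labelCount G c .zero v % 2 = (G.neighborSet v).ncard % 2 ∧
  (pos v → labelCount G c .a v % 2 = (G.neighborSet v).ncard % 2 ∧
           labelCount G c .b v % 2 = (G.neighborSet v).ncard % 2) ∧
  (¬ pos v → labelCount G c .a v % 2 = ((G.neighborSet v).ncard + 1) % 2 ∧
             labelCount G c .b v % 2 = ((G.neighborSet v).ncard + 1) % 2)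

/-- Vertices of the gadget `W k`: the `2k` cycle vertices `v_1, …, v_{2k}`
(`Sum.inl i` stands for `v_{i+1}`), the central vertex (`Sum.inr (Sum.inl ())`),
and the `k` leaf vertices (`Sum.inr (Sum.inr j)`). -/
abbrev WVert (k : ℕ) : Type := Fin (2 * k) ⊕ (Unit ⊕ Fin k)

/-- The adjacency generating relation of the gadget `W k`:
the cycle `v_1 v_2 ⋯ v_{2k}`, the spikes from the central vertex to every
odd-indexed (negative) cycle vertex `v_1, v_3, …, v_{2k-1}`, and a pendant edge from
every even-indexed (positive) cycle vertex `v_2, v_4, …, v_{2k}` to its own leaf. -/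
def wRel (k : ℕ) : WVert k → WVert k → Prop
  | .inl i, .inl j => (i.val + 1) % (2 * k) = j.val
  | .inr (.inl _), .inl i => i.val % 2 = 0
  | .inr (.inr j), .inl i => i.val = 2 * j.val + 1
  | _, _ => False

/-- The gadget graph `W k`. -/
def Wgraph (k : ℕ) : SimpleGraph (WVert k) := SimpleGraph.fromRel (wRel k)

/-- The sign function of `W k`: the cycle vertex `v_{i+1} = Sum.inl i` is negative when
`i` is even (i.e. `v_1, v_3, …` are negative) and positive when `i` is odd; the central
vertex and the leaves are positive. -/
def wPos (k : ℕ) : WVert k → Prop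
  | .inl i => i.val % 2 = 1
  | .inr _ => True

/-- The pendant edge attached to the `j`-th positive cycle vertex `v_{2j+2}`. -/
def pendantEdge (k : ℕ) (j : Fin k) : Sym2 (WVert k) :=
  s(Sum.inl ⟨2 * j.val + 1, by have := j.isLt; omega⟩, Sum.inr (Sum.inr j))

namespace GadgetProof

lemma incidenceSet_image {V : Type*} (G : SimpleGraph V) (v : V) :
    G.incidenceSet v = (fun w => s(v, w)) '' G.neighborSet v := by
  ext e
  induction e using Sym2.ind with
  | _ p q =>
    rw [SimpleGraph.mk'_mem_incidenceSet_iff]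
    constructor
    · rintro ⟨hadj, rfl | rfl⟩
      · exact ⟨q, hadj, rfl⟩
      · exact ⟨p, hadj.symm, Sym2.eq_swap⟩
    · rintro ⟨w, hw, he⟩
      simp only [Sym2.eq_iff] at he
      rcases he with ⟨rfl, rfl⟩ | ⟨rfl, rfl⟩
      · exact ⟨hw, Or.inl rfl⟩
      · exact ⟨hw.symm, Or.inr rfl⟩

lemma labelCount_eq_sum {V : Type*} [DecidableEq V] (G : SimpleGraph V)
    (c : Sym2 V → EdgeLabel) (x : EdgeLabel) (v : V) (s : Finset V)
    (hs : G.neighborSet v = ↑s) :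
    labelCount G c x v = ∑ w ∈ s, (if c s(v, w) = x then 1 else 0) := by
  classical
  have hinj : Function.Injective (fun w : V => s(v, w)) := fun w1 w2 h =>
    Sym2.congr_right.mp h
  have himg : {e ∈ G.incidenceSet v | c e = x}
      = (fun w => s(v, w)) '' {w ∈ G.neighborSet v | c s(v, w) = x} := by
    rw [incidenceSet_image]
    ext e
    constructor
    · rintro ⟨⟨w, hw, rfl⟩, hc⟩
      exact ⟨w, ⟨hw, hc⟩, rfl⟩
    · rintro ⟨w, ⟨hw, hc⟩, rfl⟩
      exact ⟨⟨w, hw, rfl⟩, hc⟩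
  rw [labelCount, himg, Set.ncard_image_of_injective _ hinj, hs]
  have : {w ∈ (↑s : Set V) | c s(v, w) = x} = ↑(s.filter (fun w => c s(v, w) = x)) := by
    ext w; simp
  rw [this, Set.ncard_coe_finset, Finset.card_filter]



variable {k : ℕ}

def ev (k : ℕ) (j : Fin k) : Fin (2 * k) := ⟨2 * j.val, by have := j.isLt; omega⟩
def od (k : ℕ) (j : Fin k) : Fin (2 * k) := ⟨2 * j.val + 1, by have := j.isLt; omega⟩
abbrev ctr (k : ℕ) : WVert k := Sum.inr (Sum.inl ())
abbrev leaf (k : ℕ) (j : Fin k) : WVert k := Sum.inr (Sum.inr j)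

lemma mod_small_cases {n a : ℕ} (hn : 0 < n) (h : a < 2 * n) :
    a % n = if a < n then a else a - n := by
  split
  · exact Nat.mod_eq_of_lt ‹_›
  · rw [Nat.mod_eq_sub_mod (le_of_not_gt ‹_›), Nat.mod_eq_of_lt (by omega)]

lemma ev_val (j : Fin k) : (ev k j).val = 2 * j.val := rfl
lemma od_val (j : Fin k) : (od k j).val = 2 * j.val + 1 := rfl

section
variable (hk : 3 ≤ k) [NeZero k]
include hk

lemma val_one2k : (1 : Fin (2 * k)).val = 1 := by
  have : (1 : Fin (2 * k)).val = 1 % (2 * k) := rfl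
  rw [this, Nat.mod_eq_of_lt (by omega)]

lemma val_add_one (i : Fin (2 * k)) : (i + 1).val = (i.val + 1) % (2 * k) := by
  rw [Fin.add_def, val_one2k hk]

lemma val_sub_one (i : Fin (2 * k)) : (i - 1).val = (i.val + (2 * k - 1)) % (2 * k) := by
  rw [Fin.sub_def, val_one2k hk]
  simp [Nat.add_comm]

lemma val_one_k : (1 : Fin k).val = 1 := by
  have : (1 : Fin k).val = 1 % k := rfl
  rw [this, Nat.mod_eq_of_lt (by omega)]

lemma val_add_one_k (j : Fin k) : ((j + 1 : Fin k)).val = (j.val + 1) % k := by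
  simp [Fin.add_def, val_one_k hk]

lemma val_sub_one_k (j : Fin k) : ((j - 1 : Fin k)).val = (j.val + (k - 1)) % k := by
  have h1 : 1 % k = 1 := Nat.mod_eq_of_lt (by omega)
  simp [Fin.sub_def, h1, Nat.add_comm]

lemma ev_add_one (j : Fin k) : ev k j + 1 = od k j := by
  apply Fin.ext
  rw [val_add_one hk, ev_val, od_val]
  exact Nat.mod_eq_of_lt (by have := j.isLt; omega)

lemma od_sub_one (j : Fin k) : od k j - 1 = ev k j := by
  apply Fin.ext
  rw [val_sub_one hk, od_val, ev_val,
    show 2 * j.val + 1 + (2 * k - 1) = 2 * j.val + 1 * (2 * k) by omega,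
    Nat.add_mul_mod_self_right]
  exact Nat.mod_eq_of_lt (by have := j.isLt; omega)

lemma ev_sub_one (j : Fin k) : ev k j - 1 = od k (j - 1) := by
  have hj := j.isLt
  apply Fin.ext
  rw [val_sub_one hk, ev_val, od_val, val_sub_one_k hk]
  rcases Nat.eq_zero_or_pos j.val with h | h
  · rw [h, Nat.mod_eq_of_lt (by omega), Nat.mod_eq_of_lt (by omega)]
    omega
  · rw [show 2 * j.val + (2 * k - 1) = (2 * j.val - 1) + 1 * (2 * k) by omega,
      Nat.add_mul_mod_self_right, Nat.mod_eq_of_lt (by omega),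
      show j.val + (k - 1) = (j.val - 1) + 1 * k by omega,
      Nat.add_mul_mod_self_right, Nat.mod_eq_of_lt (by omega)]
    omega

lemma od_add_one (j : Fin k) : od k j + 1 = ev k (j + 1) := by
  have hj := j.isLt
  apply Fin.ext
  rw [val_add_one hk, od_val, ev_val, val_add_one_k hk]
  rcases Nat.lt_or_ge (j.val + 1) k with h | h
  · rw [Nat.mod_eq_of_lt (by omega), Nat.mod_eq_of_lt (by omega)]
    omega
  · have hjk : j.val = k - 1 := by omega
    rw [show 2 * j.val + 1 + 1 = 0 + 1 * (2 * k) by omega, Nat.add_mul_mod_self_right,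
      show j.val + 1 = 0 + 1 * k by omega, Nat.add_mul_mod_self_right]
    simp

lemma self_ne_add_one (i : Fin (2 * k)) : i ≠ i + 1 := by
  intro h
  have h2 := val_add_one hk i
  rw [← h] at h2
  have hi := i.isLt
  rcases Nat.lt_or_ge (i.val + 1) (2 * k) with hlt | hge
  · rw [Nat.mod_eq_of_lt hlt] at h2; omega
  · rw [show i.val + 1 = 0 + 1 * (2 * k) by omega, Nat.add_mul_mod_self_right] at h2
    simp only [Nat.zero_mod] at h2; omega

lemma adj_inl_inl (i m : Fin (2 * k)) :
    (Wgraph k).Adj (Sum.inl i) (Sum.inl m) ↔ m = i + 1 ∨ i = m + 1 := by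
  have e1 : ∀ p q : Fin (2 * k),
      wRel k (Sum.inl p) (Sum.inl q) ↔ (p.val + 1) % (2 * k) = q.val := fun _ _ => Iff.rfl
  rw [Wgraph, SimpleGraph.fromRel_adj]
  constructor
  · rintro ⟨-, h | h⟩
    · exact Or.inl (Fin.ext (by rw [val_add_one hk]; exact ((e1 _ _).mp h).symm))
    · exact Or.inr (Fin.ext (by rw [val_add_one hk]; exact ((e1 _ _).mp h).symm))
  · rintro (rfl | rfl)
    · exact ⟨fun h => self_ne_add_one hk i (Sum.inl_injective h),
        Or.inl ((e1 _ _).mpr (val_add_one hk i).symm)⟩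
    · exact ⟨fun h => self_ne_add_one hk m (Sum.inl_injective h.symm),
        Or.inr ((e1 _ _).mpr (val_add_one hk m).symm)⟩

omit hk in
lemma adj_inl_ctr (i : Fin (2 * k)) :
    (Wgraph k).Adj (Sum.inl i) (ctr k) ↔ i.val % 2 = 0 := by
  rw [Wgraph, SimpleGraph.fromRel_adj]
  constructor
  · rintro ⟨-, h | h⟩
    · exact h.elim
    · exact h
  · intro h; exact ⟨by simp, Or.inr h⟩

omit hk in
lemma adj_inl_leaf (i : Fin (2 * k)) (j : Fin k) :
    (Wgraph k).Adj (Sum.inl i) (leaf k j) ↔ i.val = 2 * j.val + 1 := by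
  rw [Wgraph, SimpleGraph.fromRel_adj]
  constructor
  · rintro ⟨-, h | h⟩
    · exact h.elim
    · exact h
  · intro h; exact ⟨by simp, Or.inr h⟩

omit hk in
lemma adj_ctr_leaf (j : Fin k) : ¬ (Wgraph k).Adj (ctr k) (leaf k j) := by
  rw [Wgraph, SimpleGraph.fromRel_adj]
  rintro ⟨-, h | h⟩ <;> exact h.elim

lemma nbhd_ev (j : Fin k) :
    (Wgraph k).neighborSet (Sum.inl (ev k j)) =
      ↑({Sum.inl (od k j), Sum.inl (od k (j - 1)), ctr k} : Finset (WVert k)) := by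
  ext y
  simp only [SimpleGraph.mem_neighborSet, Finset.coe_insert, Set.mem_insert_iff,
    Finset.coe_singleton, Set.mem_singleton_iff]
  rcases y with m | u | j'
  · rw [adj_inl_inl hk]
    constructor
    · rintro (rfl | h)
      · rw [ev_add_one hk]; tauto
      · have hm : m = od k (j - 1) := by
          rw [← ev_sub_one hk, h, add_sub_cancel_right]
        tauto
    · rintro (hm | hm | hm)
      · left; rw [Sum.inl_injective hm, ← ev_add_one hk]
      · right
        rw [Sum.inl_injective hm, ← ev_sub_one hk, sub_add_cancel]
      · exact absurd hm (by simp)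
  · cases u
    constructor
    · intro _; right; right; rfl
    · intro _
      rw [adj_inl_ctr, ev_val]
      omega
  · rw [adj_inl_leaf]
    constructor
    · rw [ev_val]; intro h; omega
    · rintro (h | h | h) <;> simp at h

lemma nbhd_od (j : Fin k) :
    (Wgraph k).neighborSet (Sum.inl (od k j)) =
      ↑({Sum.inl (ev k (j + 1)), Sum.inl (ev k j), leaf k j} : Finset (WVert k)) := by
  ext y
  simp only [SimpleGraph.mem_neighborSet, Finset.coe_insert, Set.mem_insert_iff,
    Finset.coe_singleton, Set.mem_singleton_iff]
  rcases y with m | u | j'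
  · rw [adj_inl_inl hk]
    constructor
    · rintro (rfl | h)
      · rw [od_add_one hk]; tauto
      · have hm : m = ev k j := by
          rw [← od_sub_one hk, h, add_sub_cancel_right]
        tauto
    · rintro (hm | hm | hm)
      · left; rw [Sum.inl_injective hm, ← od_add_one hk]
      · right
        rw [Sum.inl_injective hm, ← od_sub_one hk, sub_add_cancel]
      · exact absurd hm (by simp)
  · cases u
    constructor
    · intro h
      rw [adj_inl_ctr, od_val] at h
      omega
    · rintro (h | h | h) <;> simp at h
  · rw [adj_inl_leaf, od_val]
    constructor
    · intro h
      right; right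
      have : j' = j := Fin.ext (by omega)
      rw [this]
    · rintro (h | h | h)
      · simp at h
      · simp at h
      · simp only [leaf, Sum.inr.injEq] at h
        rw [h]

lemma nbhd_ctr :
    (Wgraph k).neighborSet (ctr k) =
      ↑(Finset.image (fun j : Fin k => (Sum.inl (ev k j) : WVert k)) Finset.univ) := by
  ext y
  simp only [SimpleGraph.mem_neighborSet, Finset.coe_image, Finset.coe_univ, Set.image_univ,
    Set.mem_range]
  rcases y with m | u | j'
  · rw [SimpleGraph.adj_comm, adj_inl_ctr]
    constructor
    · intro h
      refine ⟨⟨m.val / 2, by have := m.isLt; omega⟩, ?_⟩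
      have : ev k ⟨m.val / 2, by have := m.isLt; omega⟩ = m := Fin.ext (by rw [ev_val]; simp; omega)
      rw [this]
    · rintro ⟨j, hj⟩
      have : ev k j = m := Sum.inl_injective hj
      rw [← this, ev_val]
      omega
  · cases u
    constructor
    · intro h; exact absurd h (Wgraph k).irrefl
    · rintro ⟨j, hj⟩; simp at hj
  · constructor
    · intro h; exact absurd h (adj_ctr_leaf j')
    · rintro ⟨j, hj⟩; simp at hj

lemma od_ne (j : Fin k) : od k j ≠ od k (j - 1) := by
  intro h
  have hv := congrArg Fin.val h
  rw [od_val, od_val, val_sub_one_k hk] at hv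
  have hj := j.isLt
  rcases Nat.eq_zero_or_pos j.val with h0 | h0
  · rw [h0, Nat.mod_eq_of_lt (by omega)] at hv; omega
  · rw [show j.val + (k - 1) = (j.val - 1) + 1 * k by omega, Nat.add_mul_mod_self_right,
      Nat.mod_eq_of_lt (by omega)] at hv
    omega

lemma ev_ne (j : Fin k) : ev k (j + 1) ≠ ev k j := by
  intro h
  have hv := congrArg Fin.val h
  rw [ev_val, ev_val, val_add_one_k hk] at hv
  have hj := j.isLt
  rcases Nat.lt_or_ge (j.val + 1) k with h0 | h0
  · rw [Nat.mod_eq_of_lt h0] at hv; omega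
  · rw [show j.val + 1 = 0 + 1 * k by omega, Nat.add_mul_mod_self_right,
      Nat.mod_eq_of_lt (by omega)] at hv
    omega

lemma notmem_ev1 (j : Fin k) :
    (Sum.inl (od k j) : WVert k) ∉ ({Sum.inl (od k (j - 1)), ctr k} : Finset (WVert k)) := by
  simp only [Finset.mem_insert, Finset.mem_singleton, Sum.inl.injEq]
  push_neg
  exact ⟨od_ne hk j, by simp⟩

omit hk in
lemma notmem_ev2 (j : Fin k) :
    (Sum.inl (od k (j - 1)) : WVert k) ∉ ({ctr k} : Finset (WVert k)) := by simp

lemma notmem_od1 (j : Fin k) :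
    (Sum.inl (ev k (j + 1)) : WVert k) ∉ ({Sum.inl (ev k j), leaf k j} : Finset (WVert k)) := by
  simp only [Finset.mem_insert, Finset.mem_singleton, Sum.inl.injEq]
  push_neg
  exact ⟨ev_ne hk j, by simp⟩

omit hk in
lemma notmem_od2 (j : Fin k) :
    (Sum.inl (ev k j) : WVert k) ∉ ({leaf k j} : Finset (WVert k)) := by simp

omit hk in
lemma inl_ev_inj : Function.Injective (fun j : Fin k => (Sum.inl (ev k j) : WVert k)) := by
  intro p q h
  have := congrArg Fin.val (Sum.inl_injective h)
  rw [ev_val, ev_val] at this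
  exact Fin.ext (by omega)

lemma ncard_ev (j : Fin k) : ((Wgraph k).neighborSet (Sum.inl (ev k j))).ncard = 3 := by
  rw [nbhd_ev hk, Set.ncard_coe_finset,
    Finset.card_insert_of_notMem (notmem_ev1 hk j),
    Finset.card_insert_of_notMem (notmem_ev2 j), Finset.card_singleton]

lemma ncard_od (j : Fin k) : ((Wgraph k).neighborSet (Sum.inl (od k j))).ncard = 3 := by
  rw [nbhd_od hk, Set.ncard_coe_finset,
    Finset.card_insert_of_notMem (notmem_od1 hk j),
    Finset.card_insert_of_notMem (notmem_od2 j), Finset.card_singleton]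

lemma ncard_ctr : ((Wgraph k).neighborSet (ctr k)).ncard = k := by
  rw [nbhd_ctr hk, Set.ncard_coe_finset,
    Finset.card_image_of_injective _ inl_ev_inj, Finset.card_univ, Fintype.card_fin]

def Cyc (k : ℕ) [NeZero k] (c : Sym2 (WVert k) → EdgeLabel) (i : Fin (2 * k)) : EdgeLabel :=
  c s(Sum.inl i, Sum.inl (i + 1))

def Spk (k : ℕ) (c : Sym2 (WVert k) → EdgeLabel) (j : Fin k) : EdgeLabel :=
  c s(Sum.inl (ev k j), ctr k)

lemma lc_ev (c : Sym2 (WVert k) → EdgeLabel) (x : EdgeLabel) (j : Fin k) :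
    labelCount (Wgraph k) c x (Sum.inl (ev k j)) =
      (if Cyc k c (ev k j) = x then 1 else 0) +
      ((if Cyc k c (od k (j - 1)) = x then 1 else 0) +
       (if Spk k c j = x then 1 else 0)) := by
  have e1 : (s(Sum.inl (ev k j), Sum.inl (od k j)) : Sym2 (WVert k))
      = s(Sum.inl (ev k j), Sum.inl (ev k j + 1)) := by rw [ev_add_one hk]
  have e2 : (s(Sum.inl (ev k j), Sum.inl (od k (j - 1))) : Sym2 (WVert k))
      = s(Sum.inl (od k (j - 1)), Sum.inl (od k (j - 1) + 1)) := by
    rw [od_add_one hk, sub_add_cancel, Sym2.eq_swap]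
  rw [labelCount_eq_sum _ c x _ _ (nbhd_ev hk j), Finset.sum_insert (notmem_ev1 hk j),
    Finset.sum_insert (notmem_ev2 j), Finset.sum_singleton, e1, e2]
  rfl

lemma lc_od (c : Sym2 (WVert k) → EdgeLabel) (x : EdgeLabel) (j : Fin k) :
    labelCount (Wgraph k) c x (Sum.inl (od k j)) =
      (if Cyc k c (od k j) = x then 1 else 0) +
      ((if Cyc k c (ev k j) = x then 1 else 0) +
       (if c (pendantEdge k j) = x then 1 else 0)) := by
  have e1 : (s(Sum.inl (od k j), Sum.inl (ev k (j + 1))) : Sym2 (WVert k))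
      = s(Sum.inl (od k j), Sum.inl (od k j + 1)) := by rw [od_add_one hk]
  have e2 : (s(Sum.inl (od k j), Sum.inl (ev k j)) : Sym2 (WVert k))
      = s(Sum.inl (ev k j), Sum.inl (ev k j + 1)) := by
    rw [ev_add_one hk, Sym2.eq_swap]
  rw [labelCount_eq_sum _ c x _ _ (nbhd_od hk j), Finset.sum_insert (notmem_od1 hk j),
    Finset.sum_insert (notmem_od2 j), Finset.sum_singleton, e1, e2]
  rfl

lemma lc_ctr (c : Sym2 (WVert k) → EdgeLabel) (x : EdgeLabel) :
    labelCount (Wgraph k) c x (ctr k) =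
      ∑ j : Fin k, (if Spk k c j = x then 1 else 0) := by
  rw [labelCount_eq_sum _ c x _ _ (nbhd_ctr hk),
    Finset.sum_image (fun p _ q _ h => inl_ev_inj h)]
  refine Finset.sum_congr rfl fun j _ => ?_
  rw [Sym2.eq_swap]
  rfl

omit hk in
lemma not_wpos_ev (j : Fin k) : ¬ wPos k (Sum.inl (ev k j)) := by
  show ¬ ((ev k j).val % 2 = 1)
  rw [ev_val]; omega

omit hk in
lemma wpos_od (j : Fin k) : wPos k (Sum.inl (od k j)) := by
  show (od k j).val % 2 = 1
  rw [od_val]; omega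

end
end GadgetProof

open GadgetProof

/-- **The pendant-edge parity property of the gadget `W k`.**
Let `k ≥ 3` be odd and let `c : E(W_k) → {0,a,b}` satisfy the weak signed edge-labeling
parity conditions at every cycle vertex and at the central vertex (nothing is imposed
at the leaves).  Then among the `k` pendant edges, the number labeled `a` is even, the
number labeled `b` is even, the number labeled `0` is odd, and not all pendant edges
are labeled `0`. -/
theorem gadget_pendant_edges_parity (k : ℕ) (hk3 : 3 ≤ k) (hkodd : Odd k)
    (c : Sym2 (WVert k) → EdgeLabel)
    (hc : ∀ v : WVert k, (∃ i : Fin (2 * k), v = Sum.inl i) ∨ v = Sum.inr (Sum.inl ()) →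
      WeakParityAt (Wgraph k) (wPos k) c v) :
    Even {j : Fin k | c (pendantEdge k j) = EdgeLabel.a}.ncard ∧
    Even {j : Fin k | c (pendantEdge k j) = EdgeLabel.b}.ncard ∧
    Odd {j : Fin k | c (pendantEdge k j) = EdgeLabel.zero}.ncard ∧
    ∃ j : Fin k, c (pendantEdge k j) ≠ EdgeLabel.zero := by
  haveI : NeZero k := ⟨by omega⟩
  classical
  have hk2 : k % 2 = 1 := Nat.odd_iff.mp hkodd
  have hev := fun j : Fin k => hc (Sum.inl (ev k j)) (Or.inl ⟨_, rfl⟩)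
  have hod := fun j : Fin k => hc (Sum.inl (od k j)) (Or.inl ⟨_, rfl⟩)
  have hctr := hc (ctr k) (Or.inr rfl)
  have hev0 : ∀ j, labelCount (Wgraph k) c EdgeLabel.zero (Sum.inl (ev k j)) % 2 = 1 := fun j => by
    have h := (hev j).1
    rw [ncard_ev hk3] at h
    simpa using h
  have heva : ∀ j, labelCount (Wgraph k) c EdgeLabel.a (Sum.inl (ev k j)) % 2 = 0 := fun j => by
    have h := ((hev j).2.2 (not_wpos_ev j)).1
    rw [ncard_ev hk3] at h
    simpa using h
  have hevb : ∀ j, labelCount (Wgraph k) c EdgeLabel.b (Sum.inl (ev k j)) % 2 = 0 := fun j => by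
    have h := ((hev j).2.2 (not_wpos_ev j)).2
    rw [ncard_ev hk3] at h
    simpa using h
  have hod0 : ∀ j, labelCount (Wgraph k) c EdgeLabel.zero (Sum.inl (od k j)) % 2 = 1 := fun j => by
    have h := (hod j).1
    rw [ncard_od hk3] at h
    simpa using h
  have hoda : ∀ j, labelCount (Wgraph k) c EdgeLabel.a (Sum.inl (od k j)) % 2 = 1 := fun j => by
    have h := ((hod j).2.1 (wpos_od j)).1
    rw [ncard_od hk3] at h
    simpa using h
  have hodb : ∀ j, labelCount (Wgraph k) c EdgeLabel.b (Sum.inl (od k j)) % 2 = 1 := fun j => by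
    have h := ((hod j).2.1 (wpos_od j)).2
    rw [ncard_od hk3] at h
    simpa using h
  have hctr0 : labelCount (Wgraph k) c EdgeLabel.zero (ctr k) % 2 = 1 := by
    have h := hctr.1
    rwa [ncard_ctr hk3, hk2] at h
  have hctra : labelCount (Wgraph k) c EdgeLabel.a (ctr k) % 2 = 1 := by
    have h := (hctr.2.1 trivial).1
    rwa [ncard_ctr hk3, hk2] at h
  have hctrb : labelCount (Wgraph k) c EdgeLabel.b (ctr k) % 2 = 1 := by
    have h := (hctr.2.1 trivial).2
    rwa [ncard_ctr hk3, hk2] at h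
  have hre : ∀ x : EdgeLabel, (∑ j : Fin k, if Cyc k c (od k (j - 1)) = x then 1 else 0)
      = ∑ j : Fin k, if Cyc k c (od k j) = x then 1 else 0 := fun x =>
    Fintype.sum_equiv (Equiv.subRight 1) _ _ (fun j => rfl)
  have hsumev : ∀ (x : EdgeLabel) (r : ℕ),
      (∀ j : Fin k, labelCount (Wgraph k) c x (Sum.inl (ev k j)) % 2 = r) →
      ((∑ j : Fin k, if Cyc k c (ev k j) = x then 1 else 0)
        + (∑ j : Fin k, if Cyc k c (od k j) = x then 1 else 0)
        + (∑ j : Fin k, if Spk k c j = x then 1 else 0)) % 2 = (k * r) % 2 := by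
    intro x r hp
    have h1 : (∑ j : Fin k, labelCount (Wgraph k) c x (Sum.inl (ev k j)))
        = (∑ j : Fin k, if Cyc k c (ev k j) = x then 1 else 0)
          + ((∑ j : Fin k, if Cyc k c (od k (j - 1)) = x then 1 else 0)
          + (∑ j : Fin k, if Spk k c j = x then 1 else 0)) := by
      rw [← Finset.sum_add_distrib, ← Finset.sum_add_distrib]
      exact Finset.sum_congr rfl fun j _ => lc_ev hk3 c x j
    rw [← hre x, add_assoc, ← h1, Finset.sum_nat_mod,
      Finset.sum_congr rfl fun j _ => hp j, Finset.sum_const, Finset.card_univ,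
      Fintype.card_fin, smul_eq_mul]
  have hsumod : ∀ (x : EdgeLabel) (r : ℕ),
      (∀ j : Fin k, labelCount (Wgraph k) c x (Sum.inl (od k j)) % 2 = r) →
      ((∑ j : Fin k, if Cyc k c (od k j) = x then 1 else 0)
        + (∑ j : Fin k, if Cyc k c (ev k j) = x then 1 else 0)
        + (∑ j : Fin k, if c (pendantEdge k j) = x then 1 else 0)) % 2 = (k * r) % 2 := by
    intro x r hp
    have h1 : (∑ j : Fin k, labelCount (Wgraph k) c x (Sum.inl (od k j)))
        = (∑ j : Fin k, if Cyc k c (od k j) = x then 1 else 0)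
          + ((∑ j : Fin k, if Cyc k c (ev k j) = x then 1 else 0)
          + (∑ j : Fin k, if c (pendantEdge k j) = x then 1 else 0)) := by
      rw [← Finset.sum_add_distrib, ← Finset.sum_add_distrib]
      exact Finset.sum_congr rfl fun j _ => lc_od hk3 c x j
    rw [add_assoc, ← h1, Finset.sum_nat_mod,
      Finset.sum_congr rfl fun j _ => hp j, Finset.sum_const, Finset.card_univ,
      Fintype.card_fin, smul_eq_mul]
  have hSa : (∑ j : Fin k, if Spk k c j = EdgeLabel.a then 1 else 0) % 2 = 1 := by
    rw [← lc_ctr hk3 c EdgeLabel.a]; exact hctra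
  have hSb : (∑ j : Fin k, if Spk k c j = EdgeLabel.b then 1 else 0) % 2 = 1 := by
    rw [← lc_ctr hk3 c EdgeLabel.b]; exact hctrb
  have hS0 : (∑ j : Fin k, if Spk k c j = EdgeLabel.zero then 1 else 0) % 2 = 1 := by
    rw [← lc_ctr hk3 c EdgeLabel.zero]; exact hctr0
  have hEOa := hsumev EdgeLabel.a 0 heva
  have hEOb := hsumev EdgeLabel.b 0 hevb
  have hEO0 := hsumev EdgeLabel.zero 1 hev0
  have hPa' := hsumod EdgeLabel.a 1 hoda
  have hPb' := hsumod EdgeLabel.b 1 hodb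
  have hP0' := hsumod EdgeLabel.zero 1 hod0
  have hPa : (∑ j : Fin k, if c (pendantEdge k j) = EdgeLabel.a then 1 else 0) % 2 = 0 := by
    omega
  have hPb : (∑ j : Fin k, if c (pendantEdge k j) = EdgeLabel.b then 1 else 0) % 2 = 0 := by
    omega
  have hP0 : (∑ j : Fin k, if c (pendantEdge k j) = EdgeLabel.zero then 1 else 0) % 2 = 1 := by
    omega
  have hset : ∀ x : EdgeLabel, {j : Fin k | c (pendantEdge k j) = x}.ncard
      = ∑ j : Fin k, if c (pendantEdge k j) = x then 1 else 0 := fun x => by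
    rw [Set.ncard_eq_toFinset_card', Set.toFinset_setOf, Finset.card_filter]
  refine ⟨?_, ?_, ?_, ?_⟩
  · rw [hset]; exact Nat.even_iff.mpr hPa
  · rw [hset]; exact Nat.even_iff.mpr hPb
  · rw [hset]; exact Nat.odd_iff.mpr hP0
  · by_contra hno
    push_neg at hno
    have hne : ∀ j : Fin k, Cyc k c (od k j) ≠ EdgeLabel.zero
        ∧ Cyc k c (ev k j) ≠ EdgeLabel.zero := by
      intro j
      have ha := hoda j
      have hb := hodb j
      rw [lc_od hk3 c _ j, hno j] at ha hb
      rcases hX : Cyc k c (od k j) <;> rcases hY : Cyc k c (ev k j) <;>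
        rw [hX, hY] at ha hb <;> simp at ha hb ⊢
    have hSz : ∀ j : Fin k, Spk k c j = EdgeLabel.zero := by
      intro j
      have h0 := hev0 j
      rw [lc_ev hk3 c _ j, if_neg (hne j).2, if_neg (hne (j - 1)).1] at h0
      rcases hX : Spk k c j <;> rw [hX] at h0 <;> simp at h0 ⊢
    have hzero : (∑ j : Fin k, if Spk k c j = EdgeLabel.a then 1 else 0) = 0 :=
      Finset.sum_eq_zero fun j _ => by rw [hSz j]; simp
    omega
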